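/- arXiv:1202.2519 — 6 statements merged into one kernel-verified Lean document; each statement's English description precedes it below -/
import Mathlib

section
/- In the exterior complex (E, d) as above, the element b_0 := h_{1,1}h_{3,2} + h_{2,1}h_{2,0} + h_{3,1}h_{1,1} is a cocycle: d(b_0) = 0. -/
/-- The exterior algebra over `ZMod p` on nine degree-one generators `h i j`,
`i ∈ {1,2,3}`, `j ∈ ZMod 3`. -/
abbrev E (p : ℕ) : Type := ExteriorAlgebra (ZMod p) ((Fin 3 × ZMod 3) → ZMod p)

open Fin.NatCast in
/-- The generator `h_{i,j}` (for `i ∈ {1,2,3}`). -/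
noncomputable def h (p : ℕ) (i : ℕ) (j : ZMod 3) : E p :=
  ExteriorAlgebra.ι (ZMod p) (Pi.single (((i - 1 : ℕ) : Fin 3), j) 1)

theorem b0_cocycle (p : ℕ) (hp : p.Prime) (hodd : Odd p)
    (d : E p →ₗ[ZMod p] E p)
    (hd0 : d 1 = 0)
    (hd1 : ∀ j : ZMod 3, d (h p 1 j) = 0)
    (hd2 : ∀ j : ZMod 3, d (h p 2 j) = h p 1 j * h p 1 (j + 1))
    (hd3 : ∀ j : ZMod 3, d (h p 3 j) = h p 1 j * h p 2 (j + 1) + h p 2 j * h p 1 (j + 2))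
    (hleib : ∀ i ∈ ({1, 2, 3} : Set ℕ), ∀ (j : ZMod 3) (y : E p),
      d (h p i j * y) = d (h p i j) * y - h p i j * d y)
    :
    d (h p 1 1 * h p 3 2 + h p 2 1 * h p 2 0 + h p 3 1 * h p 1 1) = 0 := by
  have m1 : (1 : ℕ) ∈ ({1, 2, 3} : Set ℕ) := by norm_num
  have m2 : (2 : ℕ) ∈ ({1, 2, 3} : Set ℕ) := by norm_num
  have m3 : (3 : ℕ) ∈ ({1, 2, 3} : Set ℕ) := by norm_num
  rw [map_add, map_add, hleib 1 m1 1, hleib 2 m2 1, hleib 3 m3 1,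
    hd1 1, hd2 1, hd2 0, hd3 1, hd3 2]
  have e1 : (1 + 2 : ZMod 3) = 0 := by decide
  have e3 : (2 + 1 : ZMod 3) = 0 := by decide
  have e4 : (2 + 2 : ZMod 3) = 1 := by decide
  have e5 : (0 + 1 : ZMod 3) = 1 := by decide
  have e6 : (1 + 1 : ZMod 3) = 2 := by decide
  rw [e1, e3, e4, e5, e6]
  noncomm_ring
end

section
/- In the exterior complex (E, d) as above, the element b_2 := h_{1,0}h_{3,1} + h_{2,0}h_{2,2} + h_{3,0}h_{1,0} is a cocycle: d(b_2) = 0. -/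
theorem b2_cocycle (p : ℕ) (hp : p.Prime) (hodd : Odd p)
    (d : E p →ₗ[ZMod p] E p)
    (hd0 : d 1 = 0)
    (hd1 : ∀ j : ZMod 3, d (h p 1 j) = 0)
    (hd2 : ∀ j : ZMod 3, d (h p 2 j) = h p 1 j * h p 1 (j + 1))
    (hd3 : ∀ j : ZMod 3, d (h p 3 j) = h p 1 j * h p 2 (j + 1) + h p 2 j * h p 1 (j + 2))
    (hleib : ∀ i ∈ ({1, 2, 3} : Set ℕ), ∀ (j : ZMod 3) (y : E p),
      d (h p i j * y) = d (h p i j) * y - h p i j * d y)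
    :
    d (h p 1 0 * h p 3 1 + h p 2 0 * h p 2 2 + h p 3 0 * h p 1 0) = 0 := by
  have l1 := hleib 1 (by simp) 0 (h p 3 1)
  have l2 := hleib 2 (by simp) 0 (h p 2 2)
  have l3 := hleib 3 (by simp) 0 (h p 1 0)
  have e1 : (1 + 1 : ZMod 3) = 2 := by decide
  have e2 : (1 + 2 : ZMod 3) = 0 := by decide
  have e3 : (2 + 1 : ZMod 3) = 0 := by decide
  have e4 : (0 + 1 : ZMod 3) = 1 := by decide
  have e5 : (0 + 2 : ZMod 3) = 2 := by decide
  rw [map_add, map_add, l1, l2, l3, hd1 0, hd2 0, hd2 2, hd3 1, hd3 0, e1, e2, e3, e4, e5]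
  noncomm_ring
end

section
/- In the exterior complex (E, d) as above, the cocycle h_{1,0}·h_{2,1}·h_{1,2} is a coboundary; explicitly, d(h_{3,0}·h_{1,2}) = h_{1,0}h_{2,1}h_{1,2}. Consequently the product of the cohomology classes of h_{1,0} and k_1 = h_{2,1}h_{1,2} vanishes in H*(E, d). -/
theorem h0k1_coboundary (p : ℕ) (hp : p.Prime) (hodd : Odd p)
    (d : E p →ₗ[ZMod p] E p)
    (hd0 : d 1 = 0)
    (hd1 : ∀ j : ZMod 3, d (h p 1 j) = 0)
    (hd2 : ∀ j : ZMod 3, d (h p 2 j) = h p 1 j * h p 1 (j + 1))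
    (hd3 : ∀ j : ZMod 3, d (h p 3 j) = h p 1 j * h p 2 (j + 1) + h p 2 j * h p 1 (j + 2))
    (hleib : ∀ i ∈ ({1, 2, 3} : Set ℕ), ∀ (j : ZMod 3) (y : E p),
      d (h p i j * y) = d (h p i j) * y - h p i j * d y)
    :
    d (h p 3 0 * h p 1 2) = h p 1 0 * (h p 2 1 * h p 1 2) ∧
    ∃ ω : E p, d ω = h p 1 0 * (h p 2 1 * h p 1 2) := by
  have hsq : h p 1 2 * h p 1 2 = 0 := ExteriorAlgebra.ι_sq_zero _
  have key : d (h p 3 0 * h p 1 2) = h p 1 0 * (h p 2 1 * h p 1 2) := by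
    rw [hleib 3 (by simp) 0 (h p 1 2), hd1, hd3]
    rw [add_mul, mul_assoc, mul_assoc, zero_add, zero_add, hsq]
    simp
  exact ⟨key, ⟨_, key⟩⟩
end

section
/- In the exterior algebra E over F_p on generators h_{i,j} (i ∈ {1,2,3}, j ∈ Z/3), set b_0 = h_{1,1}h_{3,2} + h_{2,1}h_{2,0} + h_{3,1}h_{1,1}, b_2 = h_{1,0}h_{3,1} + h_{2,0}h_{2,2} + h_{3,0}h_{1,0}, and ζ_3 = h_{3,0} + h_{3,1} + h_{3,2}. Then h_{1,0}·(h_{1,2}h_{2,1}h_{3,0})·b_0·b_2·ζ_3 = −2·h_{1,0}h_{1,1}h_{1,2}h_{2,0}h_{2,1}h_{2,2}h_{3,0}h_{3,1}h_{3,2}, the right-hand side being −2 times the top exterior class. -/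
lemma gswap {p : ℕ} (x y : (Fin 3 × ZMod 3) → ZMod p) :
    ExteriorAlgebra.ι (ZMod p) x * ExteriorAlgebra.ι (ZMod p) y =
      -(ExteriorAlgebra.ι (ZMod p) y * ExteriorAlgebra.ι (ZMod p) x) :=
  eq_neg_of_add_eq_zero_left (ExteriorAlgebra.ι_add_mul_swap x y)

lemma gswap' {p : ℕ} (x y : (Fin 3 × ZMod 3) → ZMod p) (z : E p) :
    ExteriorAlgebra.ι (ZMod p) x * (ExteriorAlgebra.ι (ZMod p) y * z) =
      -(ExteriorAlgebra.ι (ZMod p) y * (ExteriorAlgebra.ι (ZMod p) x * z)) := by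
  rw [← mul_assoc, gswap, neg_mul, mul_assoc]

lemma hswap {p : ℕ} (i j : ℕ) (a b : ZMod 3) :
    h p i a * h p j b = -(h p j b * h p i a) := gswap _ _

lemma hswap' {p : ℕ} (i j : ℕ) (a b : ZMod 3) (z : E p) :
    h p i a * (h p j b * z) = -(h p j b * (h p i a * z)) := gswap' _ _ _

lemma hsq {p : ℕ} (i : ℕ) (a : ZMod 3) : h p i a * h p i a = 0 :=
  ExteriorAlgebra.ι_sq_zero _

lemma hsq' {p : ℕ} (i : ℕ) (a : ZMod 3) (z : E p) : h p i a * (h p i a * z) = 0 := by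
  rw [← mul_assoc, hsq, zero_mul]

lemma hsq10 {p : ℕ} : h p 1 0 * h p 1 0 = 0 := hsq _ _
lemma hsqz10 {p : ℕ} (z : E p) : h p 1 0 * (h p 1 0 * z) = 0 := hsq' _ _ _
lemma hsq11 {p : ℕ} : h p 1 1 * h p 1 1 = 0 := hsq _ _
lemma hsqz11 {p : ℕ} (z : E p) : h p 1 1 * (h p 1 1 * z) = 0 := hsq' _ _ _
lemma hsq12 {p : ℕ} : h p 1 2 * h p 1 2 = 0 := hsq _ _
lemma hsqz12 {p : ℕ} (z : E p) : h p 1 2 * (h p 1 2 * z) = 0 := hsq' _ _ _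
lemma hsq20 {p : ℕ} : h p 2 0 * h p 2 0 = 0 := hsq _ _
lemma hsqz20 {p : ℕ} (z : E p) : h p 2 0 * (h p 2 0 * z) = 0 := hsq' _ _ _
lemma hsq21 {p : ℕ} : h p 2 1 * h p 2 1 = 0 := hsq _ _
lemma hsqz21 {p : ℕ} (z : E p) : h p 2 1 * (h p 2 1 * z) = 0 := hsq' _ _ _
lemma hsq22 {p : ℕ} : h p 2 2 * h p 2 2 = 0 := hsq _ _
lemma hsqz22 {p : ℕ} (z : E p) : h p 2 2 * (h p 2 2 * z) = 0 := hsq' _ _ _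
lemma hsq30 {p : ℕ} : h p 3 0 * h p 3 0 = 0 := hsq _ _
lemma hsqz30 {p : ℕ} (z : E p) : h p 3 0 * (h p 3 0 * z) = 0 := hsq' _ _ _
lemma hsq31 {p : ℕ} : h p 3 1 * h p 3 1 = 0 := hsq _ _
lemma hsqz31 {p : ℕ} (z : E p) : h p 3 1 * (h p 3 1 * z) = 0 := hsq' _ _ _
lemma hsq32 {p : ℕ} : h p 3 2 * h p 3 2 = 0 := hsq _ _
lemma hsqz32 {p : ℕ} (z : E p) : h p 3 2 * (h p 3 2 * z) = 0 := hsq' _ _ _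
lemma hs1110 {p : ℕ} : h p 1 1 * h p 1 0 = -(h p 1 0 * h p 1 1) := hswap _ _ _ _
lemma hsz1110 {p : ℕ} (z : E p) : h p 1 1 * (h p 1 0 * z) = -(h p 1 0 * (h p 1 1 * z)) := hswap' _ _ _ _ _
lemma hs1210 {p : ℕ} : h p 1 2 * h p 1 0 = -(h p 1 0 * h p 1 2) := hswap _ _ _ _
lemma hsz1210 {p : ℕ} (z : E p) : h p 1 2 * (h p 1 0 * z) = -(h p 1 0 * (h p 1 2 * z)) := hswap' _ _ _ _ _
lemma hs1211 {p : ℕ} : h p 1 2 * h p 1 1 = -(h p 1 1 * h p 1 2) := hswap _ _ _ _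
lemma hsz1211 {p : ℕ} (z : E p) : h p 1 2 * (h p 1 1 * z) = -(h p 1 1 * (h p 1 2 * z)) := hswap' _ _ _ _ _
lemma hs2010 {p : ℕ} : h p 2 0 * h p 1 0 = -(h p 1 0 * h p 2 0) := hswap _ _ _ _
lemma hsz2010 {p : ℕ} (z : E p) : h p 2 0 * (h p 1 0 * z) = -(h p 1 0 * (h p 2 0 * z)) := hswap' _ _ _ _ _
lemma hs2011 {p : ℕ} : h p 2 0 * h p 1 1 = -(h p 1 1 * h p 2 0) := hswap _ _ _ _
lemma hsz2011 {p : ℕ} (z : E p) : h p 2 0 * (h p 1 1 * z) = -(h p 1 1 * (h p 2 0 * z)) := hswap' _ _ _ _ _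
lemma hs2012 {p : ℕ} : h p 2 0 * h p 1 2 = -(h p 1 2 * h p 2 0) := hswap _ _ _ _
lemma hsz2012 {p : ℕ} (z : E p) : h p 2 0 * (h p 1 2 * z) = -(h p 1 2 * (h p 2 0 * z)) := hswap' _ _ _ _ _
lemma hs2110 {p : ℕ} : h p 2 1 * h p 1 0 = -(h p 1 0 * h p 2 1) := hswap _ _ _ _
lemma hsz2110 {p : ℕ} (z : E p) : h p 2 1 * (h p 1 0 * z) = -(h p 1 0 * (h p 2 1 * z)) := hswap' _ _ _ _ _
lemma hs2111 {p : ℕ} : h p 2 1 * h p 1 1 = -(h p 1 1 * h p 2 1) := hswap _ _ _ _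
lemma hsz2111 {p : ℕ} (z : E p) : h p 2 1 * (h p 1 1 * z) = -(h p 1 1 * (h p 2 1 * z)) := hswap' _ _ _ _ _
lemma hs2112 {p : ℕ} : h p 2 1 * h p 1 2 = -(h p 1 2 * h p 2 1) := hswap _ _ _ _
lemma hsz2112 {p : ℕ} (z : E p) : h p 2 1 * (h p 1 2 * z) = -(h p 1 2 * (h p 2 1 * z)) := hswap' _ _ _ _ _
lemma hs2120 {p : ℕ} : h p 2 1 * h p 2 0 = -(h p 2 0 * h p 2 1) := hswap _ _ _ _
lemma hsz2120 {p : ℕ} (z : E p) : h p 2 1 * (h p 2 0 * z) = -(h p 2 0 * (h p 2 1 * z)) := hswap' _ _ _ _ _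
lemma hs2210 {p : ℕ} : h p 2 2 * h p 1 0 = -(h p 1 0 * h p 2 2) := hswap _ _ _ _
lemma hsz2210 {p : ℕ} (z : E p) : h p 2 2 * (h p 1 0 * z) = -(h p 1 0 * (h p 2 2 * z)) := hswap' _ _ _ _ _
lemma hs2211 {p : ℕ} : h p 2 2 * h p 1 1 = -(h p 1 1 * h p 2 2) := hswap _ _ _ _
lemma hsz2211 {p : ℕ} (z : E p) : h p 2 2 * (h p 1 1 * z) = -(h p 1 1 * (h p 2 2 * z)) := hswap' _ _ _ _ _
lemma hs2212 {p : ℕ} : h p 2 2 * h p 1 2 = -(h p 1 2 * h p 2 2) := hswap _ _ _ _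
lemma hsz2212 {p : ℕ} (z : E p) : h p 2 2 * (h p 1 2 * z) = -(h p 1 2 * (h p 2 2 * z)) := hswap' _ _ _ _ _
lemma hs2220 {p : ℕ} : h p 2 2 * h p 2 0 = -(h p 2 0 * h p 2 2) := hswap _ _ _ _
lemma hsz2220 {p : ℕ} (z : E p) : h p 2 2 * (h p 2 0 * z) = -(h p 2 0 * (h p 2 2 * z)) := hswap' _ _ _ _ _
lemma hs2221 {p : ℕ} : h p 2 2 * h p 2 1 = -(h p 2 1 * h p 2 2) := hswap _ _ _ _
lemma hsz2221 {p : ℕ} (z : E p) : h p 2 2 * (h p 2 1 * z) = -(h p 2 1 * (h p 2 2 * z)) := hswap' _ _ _ _ _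
lemma hs3010 {p : ℕ} : h p 3 0 * h p 1 0 = -(h p 1 0 * h p 3 0) := hswap _ _ _ _
lemma hsz3010 {p : ℕ} (z : E p) : h p 3 0 * (h p 1 0 * z) = -(h p 1 0 * (h p 3 0 * z)) := hswap' _ _ _ _ _
lemma hs3011 {p : ℕ} : h p 3 0 * h p 1 1 = -(h p 1 1 * h p 3 0) := hswap _ _ _ _
lemma hsz3011 {p : ℕ} (z : E p) : h p 3 0 * (h p 1 1 * z) = -(h p 1 1 * (h p 3 0 * z)) := hswap' _ _ _ _ _
lemma hs3012 {p : ℕ} : h p 3 0 * h p 1 2 = -(h p 1 2 * h p 3 0) := hswap _ _ _ _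
lemma hsz3012 {p : ℕ} (z : E p) : h p 3 0 * (h p 1 2 * z) = -(h p 1 2 * (h p 3 0 * z)) := hswap' _ _ _ _ _
lemma hs3020 {p : ℕ} : h p 3 0 * h p 2 0 = -(h p 2 0 * h p 3 0) := hswap _ _ _ _
lemma hsz3020 {p : ℕ} (z : E p) : h p 3 0 * (h p 2 0 * z) = -(h p 2 0 * (h p 3 0 * z)) := hswap' _ _ _ _ _
lemma hs3021 {p : ℕ} : h p 3 0 * h p 2 1 = -(h p 2 1 * h p 3 0) := hswap _ _ _ _
lemma hsz3021 {p : ℕ} (z : E p) : h p 3 0 * (h p 2 1 * z) = -(h p 2 1 * (h p 3 0 * z)) := hswap' _ _ _ _ _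
lemma hs3022 {p : ℕ} : h p 3 0 * h p 2 2 = -(h p 2 2 * h p 3 0) := hswap _ _ _ _
lemma hsz3022 {p : ℕ} (z : E p) : h p 3 0 * (h p 2 2 * z) = -(h p 2 2 * (h p 3 0 * z)) := hswap' _ _ _ _ _
lemma hs3110 {p : ℕ} : h p 3 1 * h p 1 0 = -(h p 1 0 * h p 3 1) := hswap _ _ _ _
lemma hsz3110 {p : ℕ} (z : E p) : h p 3 1 * (h p 1 0 * z) = -(h p 1 0 * (h p 3 1 * z)) := hswap' _ _ _ _ _
lemma hs3111 {p : ℕ} : h p 3 1 * h p 1 1 = -(h p 1 1 * h p 3 1) := hswap _ _ _ _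
lemma hsz3111 {p : ℕ} (z : E p) : h p 3 1 * (h p 1 1 * z) = -(h p 1 1 * (h p 3 1 * z)) := hswap' _ _ _ _ _
lemma hs3112 {p : ℕ} : h p 3 1 * h p 1 2 = -(h p 1 2 * h p 3 1) := hswap _ _ _ _
lemma hsz3112 {p : ℕ} (z : E p) : h p 3 1 * (h p 1 2 * z) = -(h p 1 2 * (h p 3 1 * z)) := hswap' _ _ _ _ _
lemma hs3120 {p : ℕ} : h p 3 1 * h p 2 0 = -(h p 2 0 * h p 3 1) := hswap _ _ _ _
lemma hsz3120 {p : ℕ} (z : E p) : h p 3 1 * (h p 2 0 * z) = -(h p 2 0 * (h p 3 1 * z)) := hswap' _ _ _ _ _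
lemma hs3121 {p : ℕ} : h p 3 1 * h p 2 1 = -(h p 2 1 * h p 3 1) := hswap _ _ _ _
lemma hsz3121 {p : ℕ} (z : E p) : h p 3 1 * (h p 2 1 * z) = -(h p 2 1 * (h p 3 1 * z)) := hswap' _ _ _ _ _
lemma hs3122 {p : ℕ} : h p 3 1 * h p 2 2 = -(h p 2 2 * h p 3 1) := hswap _ _ _ _
lemma hsz3122 {p : ℕ} (z : E p) : h p 3 1 * (h p 2 2 * z) = -(h p 2 2 * (h p 3 1 * z)) := hswap' _ _ _ _ _
lemma hs3130 {p : ℕ} : h p 3 1 * h p 3 0 = -(h p 3 0 * h p 3 1) := hswap _ _ _ _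
lemma hsz3130 {p : ℕ} (z : E p) : h p 3 1 * (h p 3 0 * z) = -(h p 3 0 * (h p 3 1 * z)) := hswap' _ _ _ _ _
lemma hs3210 {p : ℕ} : h p 3 2 * h p 1 0 = -(h p 1 0 * h p 3 2) := hswap _ _ _ _
lemma hsz3210 {p : ℕ} (z : E p) : h p 3 2 * (h p 1 0 * z) = -(h p 1 0 * (h p 3 2 * z)) := hswap' _ _ _ _ _
lemma hs3211 {p : ℕ} : h p 3 2 * h p 1 1 = -(h p 1 1 * h p 3 2) := hswap _ _ _ _
lemma hsz3211 {p : ℕ} (z : E p) : h p 3 2 * (h p 1 1 * z) = -(h p 1 1 * (h p 3 2 * z)) := hswap' _ _ _ _ _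
lemma hs3212 {p : ℕ} : h p 3 2 * h p 1 2 = -(h p 1 2 * h p 3 2) := hswap _ _ _ _
lemma hsz3212 {p : ℕ} (z : E p) : h p 3 2 * (h p 1 2 * z) = -(h p 1 2 * (h p 3 2 * z)) := hswap' _ _ _ _ _
lemma hs3220 {p : ℕ} : h p 3 2 * h p 2 0 = -(h p 2 0 * h p 3 2) := hswap _ _ _ _
lemma hsz3220 {p : ℕ} (z : E p) : h p 3 2 * (h p 2 0 * z) = -(h p 2 0 * (h p 3 2 * z)) := hswap' _ _ _ _ _
lemma hs3221 {p : ℕ} : h p 3 2 * h p 2 1 = -(h p 2 1 * h p 3 2) := hswap _ _ _ _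
lemma hsz3221 {p : ℕ} (z : E p) : h p 3 2 * (h p 2 1 * z) = -(h p 2 1 * (h p 3 2 * z)) := hswap' _ _ _ _ _
lemma hs3222 {p : ℕ} : h p 3 2 * h p 2 2 = -(h p 2 2 * h p 3 2) := hswap _ _ _ _
lemma hsz3222 {p : ℕ} (z : E p) : h p 3 2 * (h p 2 2 * z) = -(h p 2 2 * (h p 3 2 * z)) := hswap' _ _ _ _ _
lemma hs3230 {p : ℕ} : h p 3 2 * h p 3 0 = -(h p 3 0 * h p 3 2) := hswap _ _ _ _
lemma hsz3230 {p : ℕ} (z : E p) : h p 3 2 * (h p 3 0 * z) = -(h p 3 0 * (h p 3 2 * z)) := hswap' _ _ _ _ _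
lemma hs3231 {p : ℕ} : h p 3 2 * h p 3 1 = -(h p 3 1 * h p 3 2) := hswap _ _ _ _
lemma hsz3231 {p : ℕ} (z : E p) : h p 3 2 * (h p 3 1 * z) = -(h p 3 1 * (h p 3 2 * z)) := hswap' _ _ _ _ _

theorem h0_l_b0_b2_zeta3 (p : ℕ) (hp : p.Prime) (hodd : Odd p)
    :
    h p 1 0 * (h p 1 2 * h p 2 1 * h p 3 0) *
        (h p 1 1 * h p 3 2 + h p 2 1 * h p 2 0 + h p 3 1 * h p 1 1) *
        (h p 1 0 * h p 3 1 + h p 2 0 * h p 2 2 + h p 3 0 * h p 1 0) *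
        (h p 3 0 + h p 3 1 + h p 3 2) =
      (-2 : ZMod p) • (h p 1 0 * h p 1 1 * h p 1 2 * h p 2 0 * h p 2 1 * h p 2 2 *
        h p 3 0 * h p 3 1 * h p 3 2) := by
  rw [neg_smul, two_smul]
  simp only [mul_add, add_mul, mul_assoc, mul_neg, neg_mul, neg_neg, mul_zero, zero_mul,
    neg_zero, add_zero, zero_add, hsq10, hsqz10, hsq11, hsqz11, hsq12, hsqz12, hsq20, hsqz20, hsq21, hsqz21, hsq22, hsqz22, hsq30, hsqz30, hsq31, hsqz31, hsq32, hsqz32, hs1110, hsz1110, hs1210, hsz1210, hs1211, hsz1211, hs2010, hsz2010, hs2011, hsz2011, hs2012, hsz2012, hs2110, hsz2110, hs2111, hsz2111, hs2112, hsz2112, hs2120, hsz2120, hs2210, hsz2210, hs2211, hsz2211, hs2212, hsz2212, hs2220, hsz2220, hs2221, hsz2221, hs3010, hsz3010, hs3011, hsz3011, hs3012, hsz3012, hs3020, hsz3020, hs3021, hsz3021, hs3022, hsz3022, hs3110, hsz3110, hs3111, hsz3111, hs3112, hsz3112, hs3120, hsz3120, hs3121, hsz3121, hs3122, hsz3122,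 hs3130, hsz3130, hs3210, hsz3210, hs3211, hsz3211, hs3212, hsz3212, hs3220, hsz3220, hs3221, hsz3221, hs3222, hsz3222, hs3230, hsz3230, hs3231, hsz3231]
  abel
end

section
/- In the exterior complex (E, d) on generators h_{i,j} (i ∈ {1,2,3}, j ∈ Z/3) with d(h_{1,j}) = 0, d(h_{2,j}) = h_{1,j}h_{1,j+1}, d(h_{3,j}) = h_{1,j}h_{2,j+1} + h_{2,j}h_{1,j+2}, the product of cocycles k_0·k_1 = h_{2,0}h_{1,1}h_{2,1}h_{1,2} is a coboundary: there exists ω ∈ E of degree 3 with d(ω) = h_{2,0}h_{1,1}h_{2,1}h_{1,2}. Hence the product of the classes [k_0][k_1] vanishes in H*(E, d). -/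
lemma h_mem (p : ℕ) (i : ℕ) (j : ZMod 3) :
    h p i j ∈ LinearMap.range (ExteriorAlgebra.ι (ZMod p) :
        ((Fin 3 × ZMod 3) → ZMod p) →ₗ[ZMod p] E p) :=
  ⟨_, rfl⟩

lemma h_sq (p : ℕ) (i : ℕ) (j : ZMod 3) : h p i j * h p i j = 0 :=
  ExteriorAlgebra.ι_sq_zero _

open Fin.NatCast in
lemma h_anti (p : ℕ) (i i' : ℕ) (j j' : ZMod 3) :
    h p i j * h p i' j' = - (h p i' j' * h p i j) := by
  have := ExteriorAlgebra.ι_add_mul_swap (R := ZMod p) (M := (Fin 3 × ZMod 3) → ZMod p)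
    (Pi.single (((i - 1 : ℕ) : Fin 3), j) (1 : ZMod p))
    (Pi.single (((i' - 1 : ℕ) : Fin 3), j') (1 : ZMod p))
  unfold h
  exact eq_neg_of_add_eq_zero_left this

set_option maxHeartbeats 1000000 in
theorem k0k1_coboundary (p : ℕ) (hp : p.Prime) (hodd : Odd p)
    (d : E p →ₗ[ZMod p] E p)
    (hd0 : d 1 = 0)
    (hd1 : ∀ j : ZMod 3, d (h p 1 j) = 0)
    (hd2 : ∀ j : ZMod 3, d (h p 2 j) = h p 1 j * h p 1 (j + 1))
    (hd3 : ∀ j : ZMod 3, d (h p 3 j) = h p 1 j * h p 2 (j + 1) + h p 2 j * h p 1 (j + 2))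
    (hleib : ∀ i ∈ ({1, 2, 3} : Set ℕ), ∀ (j : ZMod 3) (y : E p),
      d (h p i j * y) = d (h p i j) * y - h p i j * d y)
    :
    ∃ ω ∈ (LinearMap.range (ExteriorAlgebra.ι (ZMod p) :
        ((Fin 3 × ZMod 3) → ZMod p) →ₗ[ZMod p] E p)) ^ 3,
      d ω = h p 2 0 * h p 1 1 * (h p 2 1 * h p 1 2) := by
  refine ⟨h p 1 1 * (h p 2 1 * h p 3 0), ?_, ?_⟩
  · have hω : h p 1 1 * (h p 2 1 * h p 3 0) = h p 1 1 * h p 2 1 * h p 3 0 :=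
      (mul_assoc _ _ _).symm
    rw [hω, pow_succ, pow_succ, pow_one]
    exact Submodule.mul_mem_mul
      (Submodule.mul_mem_mul (h_mem p 1 1) (h_mem p 2 1)) (h_mem p 3 0)
  · have m1 : (1 : ℕ) ∈ ({1, 2, 3} : Set ℕ) := by simp
    have m2 : (2 : ℕ) ∈ ({1, 2, 3} : Set ℕ) := by simp
    have e12 : (1 : ZMod 3) + 1 = 2 := by decide
    have e01 : (0 : ZMod 3) + 1 = 1 := by decide
    have e02 : (0 : ZMod 3) + 2 = 2 := by decide
    have step1 : d (h p 2 1 * h p 3 0)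
        = h p 1 1 * h p 1 2 * h p 3 0
          - h p 2 1 * (h p 1 0 * h p 2 1 + h p 2 0 * h p 1 2) := by
      rw [hleib 2 m2, hd2 1, hd3 0, e12, e01, e02]
    have step2 : d (h p 1 1 * (h p 2 1 * h p 3 0))
        = - (h p 1 1 * (h p 1 1 * h p 1 2 * h p 3 0
          - h p 2 1 * (h p 1 0 * h p 2 1 + h p 2 0 * h p 1 2))) := by
      rw [hleib 1 m1, hd1 1, step1, zero_mul, zero_sub]
    rw [step2]
    have z1 : h p 1 1 * (h p 1 1 * h p 1 2 * h p 3 0) = 0 := by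
      rw [← mul_assoc, ← mul_assoc, h_sq]; simp
    have z2 : h p 2 1 * (h p 1 0 * h p 2 1) = 0 := by
      rw [← mul_assoc, h_anti p 2 1 1 0, neg_mul, mul_assoc, h_sq, mul_zero,
        neg_zero]
    calc - (h p 1 1 * (h p 1 1 * h p 1 2 * h p 3 0
          - h p 2 1 * (h p 1 0 * h p 2 1 + h p 2 0 * h p 1 2)))
        = - (h p 1 1 * (h p 1 1 * h p 1 2 * h p 3 0))
          + h p 1 1 * (h p 2 1 * (h p 1 0 * h p 2 1))
          + h p 1 1 * (h p 2 1 * (h p 2 0 * h p 1 2)) := by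
          rw [mul_add, mul_sub, mul_add]; abel
      _ = h p 1 1 * (h p 2 1 * (h p 2 0 * h p 1 2)) := by
          rw [z1, z2]; simp
      _ = h p 1 1 * ((h p 2 1 * h p 2 0) * h p 1 2) := by
          rw [mul_assoc (h p 2 1)]
      _ = h p 1 1 * ((-(h p 2 0 * h p 2 1)) * h p 1 2) := by
          rw [h_anti p 2 2 1 0]
      _ = -((h p 1 1 * h p 2 0) * (h p 2 1 * h p 1 2)) := by
          simp only [neg_mul, mul_neg, mul_assoc]
      _ = -((-(h p 2 0 * h p 1 1)) * (h p 2 1 * h p 1 2)) := by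
          rw [h_anti p 1 2 1 0]
      _ = h p 2 0 * h p 1 1 * (h p 2 1 * h p 1 2) := by
          simp only [neg_mul, neg_neg, mul_assoc]
end

section
/- In the exterior complex (E, d) as above, the class of h_{1,1}·k_1·ζ_3 is represented by a nonzero cocycle: the element h_{1,1}h_{2,1}h_{1,2}(h_{3,0}+h_{3,1}+h_{3,2}) is a cocycle in E (d of it is 0), and it is a nonzero element of E. -/
/-- swapping two generators changes sign (sum form). -/
lemma h_add_mul_swap (p : ℕ) (i j i' j') :
    h p i j * h p i' j' + h p i' j' * h p i j = 0 := by
  unfold h; exact ExteriorAlgebra.ι_add_mul_swap _ _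

lemma h_sq_zero (p : ℕ) (i j) : h p i j * h p i j = 0 := by
  unfold h; exact ExteriorAlgebra.ι_sq_zero _

noncomputable def gmap (p : ℕ) :
    ((Fin 3 × ZMod 3) → ZMod p) →ₗ[ZMod p] (Fin 4 → ZMod p) :=
  LinearMap.pi (fun i : Fin 4 =>
    LinearMap.proj ((![(0,1),(1,1),(0,2),(2,0)] : Fin 4 → Fin 3 × ZMod 3) i))

noncomputable def Fmap (p : ℕ) :
    ((Fin 3 × ZMod 3) → ZMod p) [⋀^Fin 4]→ₗ[ZMod p] ZMod p :=
  (Matrix.detRowAlternating).compLinearMap (gmap p)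

noncomputable def fam (p : ℕ) :
    ∀ n, ((Fin 3 × ZMod 3) → ZMod p) [⋀^Fin n]→ₗ[ZMod p] ZMod p
  | 4 => Fmap p
  | _ => 0

open ExteriorAlgebra in
lemma lift_prod4 (p : ℕ) (v : Fin 4 → ((Fin 3 × ZMod 3) → ZMod p)) :
    liftAlternating (fam p)
      (ι (ZMod p) (v 0) * ι (ZMod p) (v 1) * ι (ZMod p) (v 2) * ι (ZMod p) (v 3)) =
      Matrix.det (Matrix.of fun i k =>
        (v i) ((![(0,1),(1,1),(0,2),(2,0)] : Fin 4 → Fin 3 × ZMod 3) k)) := by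
  have hm : ιMulti (ZMod p) 4 v =
      ι (ZMod p) (v 0) * ι (ZMod p) (v 1) * ι (ZMod p) (v 2) * ι (ZMod p) (v 3) := by
    simp [ιMulti_apply, List.ofFn_succ, mul_assoc, Matrix.vecTail, Function.comp]
  rw [← hm, liftAlternating_apply_ιMulti]
  rfl

set_option maxHeartbeats 1000000 in
theorem h1k1zeta3_nonzero_cocycle (p : ℕ) (hp : p.Prime) (hodd : Odd p)
    (d : E p →ₗ[ZMod p] E p)
    (hd0 : d 1 = 0)
    (hd1 : ∀ j : ZMod 3, d (h p 1 j) = 0)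
    (hd2 : ∀ j : ZMod 3, d (h p 2 j) = h p 1 j * h p 1 (j + 1))
    (hd3 : ∀ j : ZMod 3, d (h p 3 j) = h p 1 j * h p 2 (j + 1) + h p 2 j * h p 1 (j + 2))
    (hleib : ∀ i ∈ ({1, 2, 3} : Set ℕ), ∀ (j : ZMod 3) (y : E p),
      d (h p i j * y) = d (h p i j) * y - h p i j * d y)
    :
    d (h p 1 1 * (h p 2 1 * h p 1 2) * (h p 3 0 + h p 3 1 + h p 3 2)) = 0 ∧
    h p 1 1 * (h p 2 1 * h p 1 2) * (h p 3 0 + h p 3 1 + h p 3 2) ≠ 0 := by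
  haveI : Fact p.Prime := ⟨hp⟩
  haveI : Fact (1 < p) := ⟨hp.one_lt⟩
  have hZ : d (h p 3 0 + h p 3 1 + h p 3 2) = 0 := by
    have e0 := hd3 0
    have e1 := hd3 1
    have e2 := hd3 2
    rw [show ((0:ZMod 3)+1) = 1 by decide, show ((0:ZMod 3)+2) = 2 by decide] at e0
    rw [show ((1:ZMod 3)+1) = 2 by decide, show ((1:ZMod 3)+2) = 0 by decide] at e1
    rw [show ((2:ZMod 3)+1) = 0 by decide, show ((2:ZMod 3)+2) = 1 by decide] at e2
    have : d (h p 3 0 + h p 3 1 + h p 3 2)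
        = (h p 1 0 * h p 2 1 + h p 2 1 * h p 1 0)
        + (h p 2 0 * h p 1 2 + h p 1 2 * h p 2 0)
        + (h p 1 1 * h p 2 2 + h p 2 2 * h p 1 1) := by
      rw [map_add, map_add, e0, e1, e2]; abel
    rw [this, h_add_mul_swap, h_add_mul_swap, h_add_mul_swap]
    simp
  constructor
  · -- cocycle
    have l3 : d (h p 1 2 * (h p 3 0 + h p 3 1 + h p 3 2)) = 0 := by
      rw [hleib 1 (by simp) 2 _, hd1, hZ, zero_mul, mul_zero, sub_zero]
    have l2 : d (h p 2 1 * (h p 1 2 * (h p 3 0 + h p 3 1 + h p 3 2)))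
        = h p 1 1 * h p 1 2 * (h p 1 2 * (h p 3 0 + h p 3 1 + h p 3 2)) := by
      rw [hleib 2 (by simp) 1 _, hd2 1, show ((1:ZMod 3)+1) = 2 by decide, l3,
        mul_zero, sub_zero]
    have l1 : d (h p 1 1 * (h p 2 1 * (h p 1 2 * (h p 3 0 + h p 3 1 + h p 3 2)))) = 0 := by
      rw [hleib 1 (by simp) 1 _, hd1, zero_mul, l2, zero_sub, neg_eq_zero]
      rw [mul_assoc (h p 1 1) (h p 1 2) _, ← mul_assoc (h p 1 1) (h p 1 1),
        h_sq_zero, zero_mul]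
    calc d (h p 1 1 * (h p 2 1 * h p 1 2) * (h p 3 0 + h p 3 1 + h p 3 2))
        = d (h p 1 1 * (h p 2 1 * (h p 1 2 * (h p 3 0 + h p 3 1 + h p 3 2)))) := by
          rw [mul_assoc (h p 1 1) (h p 2 1 * h p 1 2) _,
            mul_assoc (h p 2 1) (h p 1 2) _]
      _ = 0 := l1
  · -- nonzero
    have expand : h p 1 1 * (h p 2 1 * h p 1 2) * (h p 3 0 + h p 3 1 + h p 3 2)
        = (h p 1 1 * h p 2 1 * h p 1 2 * h p 3 0)
        + (h p 1 1 * h p 2 1 * h p 1 2 * h p 3 1)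
        + (h p 1 1 * h p 2 1 * h p 1 2 * h p 3 2) := by
      rw [mul_add (h p 1 1 * (h p 2 1 * h p 1 2)) (h p 3 0 + h p 3 1) (h p 3 2),
        mul_add (h p 1 1 * (h p 2 1 * h p 1 2)) (h p 3 0) (h p 3 1),
        ← mul_assoc (h p 1 1) (h p 2 1) (h p 1 2)]
    have key : ∀ j : ZMod 3,
        ExteriorAlgebra.liftAlternating (fam p)
          (h p 1 1 * h p 2 1 * h p 1 2 * h p 3 j)
        = Matrix.det (Matrix.of fun i k =>
            ((![Pi.single ((0 : Fin 3), (1 : ZMod 3)) 1,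
                Pi.single ((1 : Fin 3), (1 : ZMod 3)) 1,
                Pi.single ((0 : Fin 3), (2 : ZMod 3)) 1,
                Pi.single ((2 : Fin 3), j) 1] : Fin 4 → ((Fin 3 × ZMod 3) → ZMod p)) i)
              ((![(0,1),(1,1),(0,2),(2,0)] : Fin 4 → Fin 3 × ZMod 3) k)) := by
      intro j
      have := lift_prod4 p ![Pi.single ((0 : Fin 3), (1 : ZMod 3)) 1,
                Pi.single ((1 : Fin 3), (1 : ZMod 3)) 1,
                Pi.single ((0 : Fin 3), (2 : ZMod 3)) 1,
                Pi.single ((2 : Fin 3), j) 1]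
      open Fin.NatCast in
      simpa [h, show ((1 : ℕ) : Fin 3) = 1 by decide] using this
    have d0 : Matrix.det (Matrix.of fun i k =>
            ((![Pi.single ((0 : Fin 3), (1 : ZMod 3)) 1,
                Pi.single ((1 : Fin 3), (1 : ZMod 3)) 1,
                Pi.single ((0 : Fin 3), (2 : ZMod 3)) 1,
                Pi.single ((2 : Fin 3), (0 : ZMod 3)) 1] : Fin 4 → ((Fin 3 × ZMod 3) → ZMod p)) i)
              ((![(0,1),(1,1),(0,2),(2,0)] : Fin 4 → Fin 3 × ZMod 3) k))
        = 1 := by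
      have : (Matrix.of fun i k =>
            ((![Pi.single ((0 : Fin 3), (1 : ZMod 3)) 1,
                Pi.single ((1 : Fin 3), (1 : ZMod 3)) 1,
                Pi.single ((0 : Fin 3), (2 : ZMod 3)) 1,
                Pi.single ((2 : Fin 3), (0 : ZMod 3)) 1] : Fin 4 → ((Fin 3 × ZMod 3) → ZMod p)) i)
              ((![(0,1),(1,1),(0,2),(2,0)] : Fin 4 → Fin 3 × ZMod 3) k))
          = (1 : Matrix (Fin 4) (Fin 4) (ZMod p)) := by
        ext i k
        fin_cases i <;> fin_cases k <;>
          simp [Pi.single_apply, Matrix.one_apply] <;> decide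
      rw [this, Matrix.det_one]
    have dz : ∀ j : ZMod 3, j ≠ 0 → Matrix.det (Matrix.of fun i k =>
            ((![Pi.single ((0 : Fin 3), (1 : ZMod 3)) 1,
                Pi.single ((1 : Fin 3), (1 : ZMod 3)) 1,
                Pi.single ((0 : Fin 3), (2 : ZMod 3)) 1,
                Pi.single ((2 : Fin 3), j) 1] : Fin 4 → ((Fin 3 × ZMod 3) → ZMod p)) i)
              ((![(0,1),(1,1),(0,2),(2,0)] : Fin 4 → Fin 3 × ZMod 3) k))
        = 0 := by
      intro j hj
      apply Matrix.det_eq_zero_of_row_eq_zero 3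
      intro k
      fin_cases k <;> simp [Pi.single_apply, Prod.ext_iff, Matrix.vecHead, Matrix.vecTail, Ne.symm hj]
    have hval : ExteriorAlgebra.liftAlternating (fam p)
        (h p 1 1 * (h p 2 1 * h p 1 2) * (h p 3 0 + h p 3 1 + h p 3 2)) = 1 := by
      rw [expand, map_add, map_add, key 0, key 1, key 2, d0,
        dz 1 (by decide), dz 2 (by decide)]
      norm_num
    intro hzero
    rw [hzero, map_zero] at hval
    simpa using hval
end
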